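/- Let ρ be a positive real number with ρ ≠ 1 and set β = (ρ+1)/(2(ρ−1)). Define the 2×2 matrices over A: L₀ = [[(1/2)·1 + K, −ρ⁻¹·S], [ρ·N, (1/2)·1 − K']], L₀ᵗ = [[(1/2)·1 − K, ρ⁻¹·S], [−ρ·N, (1/2)·1 + K']], CFK₀ = [[−2K, ((ρ+1)/ρ)·S], [−(1+ρ)·N, 2K']], CFK₀ᵗ = [[2K, −((ρ+1)/ρ)·S], [(1+ρ)·N, −2K']], R₀ = (1/(ρ+1))·[[1, 2S], [−2ρ·N, ρ·1]], R₀ᵗ = (1/(ρ+1))·[[ρ·1, −2S], [2ρ·N, 1]], GFK₀ = L₀ + R₀·CFK₀ and GFK₀ᵗ = L₀ᵗ + CFK₀ᵗ·R₀ᵗ. Then GFK₀ᵗ · GFK₀ = diag(A₁, A₁'), where A₁ = (4(ρ−1)²/(ρ+1)²)·(K + β·1)·(K³ − 3β·K² + β·1) and A₁' = (4(ρ−1)²/(ρ+1)²)·(K' + β·1)·(K'³ − 3β·K'² + β·1). -/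
import Mathlib
set_option maxHeartbeats 1000000 in
theorem GFK0t_mul_GFK0 (A : Type*) [Ring A] [Algebra ℝ A]
    (S N K K' : A)
    (hSN : S * N = -(1/4 : ℝ) • (1 : A) + K ^ 2)
    (hNS : N * S = -(1/4 : ℝ) • (1 : A) + K' ^ 2)
    (hNK : N * K = K' * N)
    (hKS : K * S = S * K')
    (ρ : ℝ) (hρ : 0 < ρ) (hρ1 : ρ ≠ 1)
    (β : ℝ) (hβ : β = (ρ + 1) / (2 * (ρ - 1)))
    (L₀ L₀t CFK₀ CFK₀t R₀ R₀t GFK₀ GFK₀t : Matrix (Fin 2) (Fin 2) A)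
    (hL₀ : L₀ = !![(1/2 : ℝ) • (1 : A) + K, -(ρ⁻¹ • S); ρ • N, (1/2 : ℝ) • (1 : A) - K'])
    (hL₀t : L₀t = !![(1/2 : ℝ) • (1 : A) - K, ρ⁻¹ • S; -(ρ • N), (1/2 : ℝ) • (1 : A) + K'])
    (hCFK₀ : CFK₀ = !![-(2 : ℝ) • K, ((ρ + 1)/ρ) • S; -(1 + ρ) • N, (2 : ℝ) • K'])
    (hCFK₀t : CFK₀t = !![(2 : ℝ) • K, -((ρ + 1)/ρ) • S; (1 + ρ) • N, -(2 : ℝ) • K'])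
    (hR₀ : R₀ = (1/(ρ + 1)) • !![(1 : A), (2 : ℝ) • S; -(2*ρ) • N, ρ • (1 : A)])
    (hR₀t : R₀t = (1/(ρ + 1)) • !![ρ • (1 : A), -(2 : ℝ) • S; (2*ρ) • N, (1 : A)])
    (hGFK₀ : GFK₀ = L₀ + R₀ * CFK₀)
    (hGFK₀t : GFK₀t = L₀t + CFK₀t * R₀t) :
    GFK₀t * GFK₀ =
      !![(4*(ρ - 1)^2/(ρ + 1)^2) •
           ((K + β • (1 : A)) * (K ^ 3 - (3*β) • K ^ 2 + β • (1 : A))), 0;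
         0, (4*(ρ - 1)^2/(ρ + 1)^2) •
           ((K' + β • (1 : A)) * (K' ^ 3 - (3*β) • K' ^ 2 + β • (1 : A)))] := by
  have h0 : ρ ≠ 0 := ne_of_gt hρ
  have h1 : ρ + 1 ≠ 0 := by positivity
  have hm : ρ - 1 ≠ 0 := sub_ne_zero.mpr hρ1
  have hβ' : 2*(ρ-1)*β = ρ + 1 := by rw [hβ]; field_simp
  -- element-level key lemmas
  have keyA : (S*K')*(K'*N) = K^4 - (1/4:ℝ) • K^2 := by
    have hK2 : K' ^ 2 = N * S + (1/4 : ℝ) • (1:A) := by rw [hNS]; module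
    have h2 : (S*K')*(K'*N) = S*(K'^2*N) := by noncomm_ring
    rw [h2, hK2]
    have h3 : S * ((N * S + (1/4:ℝ) • (1:A)) * N) = (S*N)*(S*N) + (1/4:ℝ)•(S*N) := by
      simp only [add_mul, smul_mul_assoc, one_mul, mul_add, mul_smul_comm, ← mul_assoc]
    rw [h3, hSN]
    have p4 : K^2*K^2 = K^4 := by rw [← pow_add]
    simp only [mul_add, add_mul, smul_mul_assoc, mul_smul_comm, smul_smul, mul_one, one_mul,
      smul_add, p4]
    match_scalars <;> ring
  have keyB : (K'*N)*(S*K') = K'^4 - (1/4:ℝ) • K'^2 := by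
    have h2 : (K'*N)*(S*K') = K'*((N*S)*K') := by noncomm_ring
    rw [h2, hNS]
    have p1 : K'*K' = K'^2 := (sq K').symm
    have p4 : K'^2*K'^2 = K'^4 := by rw [← pow_add]
    simp only [mul_add, add_mul, smul_mul_assoc, mul_smul_comm, smul_smul, mul_one, one_mul,
      ← mul_assoc, p1, p4]
    rw [show K'*K'^2*K' = K'^4 by rw [← pow_succ', ← pow_succ]]
    match_scalars <;> ring
  have f1 : K*(S*K') = S*K'^2 := by rw [← mul_assoc, hKS, mul_assoc, ← sq]
  have f2 : K^2*(S*K') = S*K'^3 := by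
    rw [sq, mul_assoc, f1, ← mul_assoc, hKS, mul_assoc, ← pow_succ']
  have g1 : (S*K')*K' = S*K'^2 := by rw [mul_assoc, ← sq]
  have g2 : (S*K')*K'^2 = S*K'^3 := by rw [mul_assoc, ← pow_succ']
  have f1' : (K'*N)*K = K'^2*N := by rw [mul_assoc, hNK, ← mul_assoc, ← sq]
  have f2' : (K'*N)*K^2 = K'^3*N := by
    rw [sq, ← mul_assoc, f1', mul_assoc, hNK, ← mul_assoc, ← pow_succ]
  have g1' : K'*(K'*N) = K'^2*N := by rw [← mul_assoc, ← sq]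
  have g2' : K'^2*(K'*N) = K'^3*N := by rw [← mul_assoc, ← pow_succ]
  -- power normalizers
  have p1 : K*K = K^2 := (sq K).symm
  have p2 : K*K^2 = K^3 := by rw [← pow_succ']
  have p3 : K^2*K = K^3 := by rw [← pow_succ]
  have p4 : K^2*K^2 = K^4 := by rw [← pow_add]
  have p5 : K*K^3 = K^4 := by rw [← pow_succ']
  have q1 : K'*K' = K'^2 := (sq K').symm
  have q2 : K'*K'^2 = K'^3 := by rw [← pow_succ']
  have q3 : K'^2*K' = K'^3 := by rw [← pow_succ]
  have q4 : K'^2*K'^2 = K'^4 := by rw [← pow_add]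
  have q5 : K'*K'^3 = K'^4 := by rw [← pow_succ']
  -- scaled forms
  set Pa : A := (ρ+1) • (1:A) + (ρ-1) • K - (2*(ρ+1)) • K^2 with hPa
  set Pa' : A := (ρ+1) • (1:A) + (ρ-1) • K' - (2*(ρ+1)) • K'^2 with hPa'
  set Qa : A := (4:ℝ) • (S*K') with hQa
  set Ra : A := (4*ρ:ℝ) • (K'*N) with hRa
  have hGs : (ρ+1) • GFK₀ = !![Pa, Qa; Ra, Pa'] := by
    rw [hGFK₀, hL₀, hR₀, hCFK₀, hPa, hQa, hRa, hPa']
    ext i j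
    fin_cases i <;> fin_cases j <;>
      simp [Matrix.mul_apply, Fin.sum_univ_two, smul_smul, mul_add, add_mul, smul_add, smul_sub,
        smul_mul_assoc, mul_smul_comm]
    · rw [hSN]; match_scalars <;> field_simp <;> ring
    · match_scalars <;> field_simp <;> ring
    · rw [hNK]; match_scalars <;> field_simp <;> ring
    · rw [hNS]; match_scalars <;> field_simp <;> ring
  have hGts : (ρ+1) • GFK₀t = !![Pa, -Qa; -Ra, Pa'] := by
    rw [hGFK₀t, hL₀t, hR₀t, hCFK₀t, hPa, hQa, hRa, hPa']
    ext i j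
    fin_cases i <;> fin_cases j <;>
      simp [Matrix.mul_apply, Fin.sum_univ_two, smul_smul, mul_add, add_mul, smul_add, smul_sub,
        smul_mul_assoc, mul_smul_comm]
    · rw [hSN]; match_scalars <;> field_simp <;> ring
    · rw [hKS]; match_scalars <;> field_simp <;> ring
    · match_scalars <;> field_simp <;> ring
    · rw [hNS]; match_scalars <;> field_simp <;> ring
  -- cancel the scaling
  have hscale : ∀ X Y : Matrix (Fin 2) (Fin 2) A,
      ((ρ+1) • X) * ((ρ+1) • Y) = ((ρ+1)^2) • (X * Y) := by
    intro X Y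
    rw [Matrix.smul_mul, Matrix.mul_smul, smul_smul, sq]
  have key : ((ρ+1)^2) • (GFK₀t * GFK₀) = ((ρ+1)^2) •
      !![(4*(ρ - 1)^2/(ρ + 1)^2) •
           ((K + β • (1 : A)) * (K ^ 3 - (3*β) • K ^ 2 + β • (1 : A))), 0;
         0, (4*(ρ - 1)^2/(ρ + 1)^2) •
           ((K' + β • (1 : A)) * (K' ^ 3 - (3*β) • K' ^ 2 + β • (1 : A)))] := by
    rw [← hscale, hGs, hGts, Matrix.mul_fin_two]
    have hc : ((ρ+1)^2 : ℝ) * (4*(ρ - 1)^2/(ρ + 1)^2) = 4*(ρ-1)^2 := by field_simp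
    ext i j
    fin_cases i <;> fin_cases j <;> simp
    · rw [smul_smul, hc, hPa, hQa, hRa]
      simp only [mul_add, add_mul, mul_sub, sub_mul, smul_mul_assoc, mul_smul_comm, smul_smul,
        mul_one, one_mul, neg_smul, smul_neg, neg_mul, mul_neg, smul_add, smul_sub, neg_neg,
        p1, p2, p3, p4, p5, keyA]
      match_scalars
      · linear_combination (-(2*(ρ-1)*β + (ρ+1))) * hβ'
      · linear_combination (-2*(ρ-1)) * hβ'
      · linear_combination (3*(2*(ρ-1)*β + (ρ+1))) * hβ'
      · linear_combination (4*(ρ-1)) * hβ'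
      · ring
    · rw [hPa, hQa, hPa']
      simp only [mul_add, add_mul, mul_sub, sub_mul, smul_mul_assoc, mul_smul_comm, smul_smul,
        mul_one, one_mul, neg_smul, smul_neg, neg_mul, mul_neg, smul_add, smul_sub, neg_neg,
        f1, f2, g1, g2]
      match_scalars <;> ring
    · rw [hPa, hRa, hPa']
      simp only [mul_add, add_mul, mul_sub, sub_mul, smul_mul_assoc, mul_smul_comm, smul_smul,
        mul_one, one_mul, neg_smul, smul_neg, neg_mul, mul_neg, smul_add, smul_sub, neg_neg,
        f1', f2', g1', g2']
      match_scalars <;> ring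
    · rw [smul_smul, hc, hPa', hQa, hRa]
      simp only [mul_add, add_mul, mul_sub, sub_mul, smul_mul_assoc, mul_smul_comm, smul_smul,
        mul_one, one_mul, neg_smul, smul_neg, neg_mul, mul_neg, smul_add, smul_sub, neg_neg,
        q1, q2, q3, q4, q5, keyB]
      match_scalars
      · ring
      · linear_combination (3*(2*(ρ-1)*β + (ρ+1))) * hβ'
      · linear_combination (-(2*(ρ-1)*β + (ρ+1))) * hβ'
      · linear_combination (-2*(ρ-1)) * hβ'
      · linear_combination (4*(ρ-1)) * hβ'
  have h2 : ((ρ+1)^2 : ℝ) ≠ 0 := pow_ne_zero _ h1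
  have := congrArg (fun M => (((ρ+1)^2)⁻¹ : ℝ) • M) key
  simpa [smul_smul, inv_mul_cancel₀ h2, inv_mul_cancel_left₀ h2, one_smul] using this
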